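/- Let K ≥ 2 be an integer, let κ_1,…,κ_K be positive reals with product G = ∏_{i=1}^K κ_i and harmonic mean κ = K(Σ_{i=1}^K 1/κ_i)^{−1}, and let c_2 > 0 be a real constant. Let P_K be the unique polynomial with z^K + z^{−K} − 2 = P_K(z + z^{−1} − 2) for all z ≠ 0. For x ≥ 0 define λ_0(x) = [−K²G/κ + √((K²G/κ)² + 4 c_2 G P_K(x))]/(2 c_2), the root of smaller absolute value of the quadratic c_2 λ² + (K²G/κ) λ − G P_K(x) = 0. Then, as x → 0⁺, λ_0(x) = κ x + κ[ (K²−1)/12 − c_2 κ²/(K² G) ] x² + O(x³). -/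

import Mathlib

open Asymptotics Filter Polynomial Topology

noncomputable def chebQ : ℕ → Polynomial ℝ
  | 0 => Polynomial.C 2
  | 1 => Polynomial.X + Polynomial.C 2
  | (n+2) => (Polynomial.X + Polynomial.C 2) * chebQ (n+1) - chebQ n

lemma chebQ_eval (n : ℕ) {z : ℝ} (hz : z ≠ 0) :
    (chebQ n).eval (z + z⁻¹ - 2) = z ^ n + z⁻¹ ^ n := by
  induction n using Nat.twoStepInduction with
  | zero => norm_num [chebQ]
  | one => simp [chebQ]
  | more n ih1 ih2 =>
    simp only [chebQ, eval_mul, eval_add, eval_X, eval_C, eval_sub, ih1, ih2]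
    have hzz : z * z⁻¹ = 1 := mul_inv_cancel₀ hz
    linear_combination (z ^ n + z⁻¹ ^ n) * hzz

lemma chebQ_coeff0 (n : ℕ) : (chebQ n).coeff 0 = 2 := by
  induction n using Nat.twoStepInduction with
  | zero => simp [chebQ]
  | one => simp [chebQ]
  | more n ih1 ih2 =>
    simp [chebQ, add_mul, coeff_sub, coeff_add, coeff_C_mul, mul_coeff_zero, ih1, ih2]
    norm_num

lemma chebQ_coeff1 (n : ℕ) : (chebQ n).coeff 1 = (n:ℝ)^2 := by
  induction n using Nat.twoStepInduction with
  | zero => simp [chebQ]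
  | one => simp [chebQ]
  | more n ih1 ih2 =>
    simp [chebQ, add_mul, coeff_sub, coeff_add, coeff_C_mul, coeff_X_mul, ih1, ih2, chebQ_coeff0]
    ring_nf

lemma chebQ_coeff2 (n : ℕ) : (chebQ n).coeff 2 = (n:ℝ)^2 * ((n:ℝ)^2 - 1) / 12 := by
  induction n using Nat.twoStepInduction with
  | zero => simp [chebQ]
  | one => norm_num [chebQ, coeff_X]
  | more n ih1 ih2 =>
    have h1 : ((X : Polynomial ℝ) * chebQ (n+1)).coeff 2 = (chebQ (n+1)).coeff 1 := coeff_X_mul _ 1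
    simp [chebQ, add_mul, coeff_sub, coeff_add, coeff_C_mul, h1, ih1, ih2, chebQ_coeff1]
    ring

lemma eval_P_eq (K : ℕ) (P : Polynomial ℝ)
    (hP : ∀ z : ℂ, z ≠ 0 → z ^ K + z⁻¹ ^ K - 2 = Polynomial.aeval (z + z⁻¹ - 2) P)
    {x : ℝ} (hx : 0 < x) : P.eval x = (chebQ K).eval x - 2 := by
  set s := x + 2 with hs
  have hs2 : 2 < s := by simp [hs]; linarith
  have hdisc : (0:ℝ) ≤ s^2 - 4 := by nlinarith
  set z := (s + Real.sqrt (s^2-4))/2 with hzdef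
  have hsq : Real.sqrt (s^2-4)^2 = s^2-4 := Real.sq_sqrt hdisc
  have hsn : 0 ≤ Real.sqrt (s^2-4) := Real.sqrt_nonneg _
  have hz1 : 1 < z := by rw [hzdef]; linarith
  have hz0 : z ≠ 0 := by linarith
  have hquad : z^2 - s*z + 1 = 0 := by
    rw [hzdef]; linear_combination (1/4) * hsq
  have hinv : z⁻¹ = s - z := by
    have hm : z * (s - z) = 1 := by linear_combination -1 * hquad
    exact inv_eq_of_mul_eq_one_right hm
  have hzx : z + z⁻¹ - 2 = x := by rw [hinv, hs]; ring
  have hc := hP (z : ℂ) (by exact_mod_cast hz0)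
  have hcast : (z:ℂ) + (z:ℂ)⁻¹ - 2 = ((x:ℝ):ℂ) := by
    rw [← Complex.ofReal_inv]
    exact_mod_cast congrArg (Complex.ofReal) hzx
  rw [hcast] at hc
  have haev : Polynomial.aeval ((x:ℝ):ℂ) P = ((P.eval x : ℝ) : ℂ) := by
    rw [show ((x:ℝ):ℂ) = algebraMap ℝ ℂ x from rfl, aeval_algebraMap_apply]
    simp
  rw [haev, ← Complex.ofReal_inv] at hc
  have hreal : z ^ K + z⁻¹ ^ K - 2 = P.eval x := by exact_mod_cast hc
  rw [← hreal, ← hzx, chebQ_eval K hz0]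


open Asymptotics Filter

/-- Let `K ≥ 2`, let `κ_1,…,κ_K` be positive reals with product `G = ∏ κ_i` and harmonic
mean `κ_h = K (∑ 1/κ_i)⁻¹`, and let `c₂ > 0`.  Let `P_K` be the unique polynomial with
`z^K + z^{−K} − 2 = P_K(z + z^{−1} − 2)` for all `z ≠ 0`.  For `x ≥ 0` let
`λ₀(x) = [−K²G/κ_h + √((K²G/κ_h)² + 4 c₂ G P_K(x))]/(2 c₂)` be the smaller-magnitude root
of `c₂ λ² + (K²G/κ_h) λ − G P_K(x) = 0`.  Then, as `x → 0⁺`,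
`λ₀(x) = κ_h x + κ_h [(K²−1)/12 − c₂ κ_h²/(K² G)] x² + O(x³)`. -/
theorem stmt9 (K : ℕ) (hK : 2 ≤ K) (κ : Fin K → ℝ) (hκ : ∀ i, 0 < κ i)
    (c₂ : ℝ) (hc₂ : 0 < c₂) (P : Polynomial ℝ)
    (hP : ∀ z : ℂ, z ≠ 0 → z ^ K + z⁻¹ ^ K - 2 = Polynomial.aeval (z + z⁻¹ - 2) P) :
    (fun x : ℝ =>
        (-((K : ℝ) ^ 2 * (∏ i, κ i) / ((K : ℝ) * (∑ i, (κ i)⁻¹)⁻¹))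
            + Real.sqrt (((K : ℝ) ^ 2 * (∏ i, κ i) / ((K : ℝ) * (∑ i, (κ i)⁻¹)⁻¹)) ^ 2
                + 4 * c₂ * (∏ i, κ i) * P.eval x)) / (2 * c₂)
          - (((K : ℝ) * (∑ i, (κ i)⁻¹)⁻¹) * x
              + ((K : ℝ) * (∑ i, (κ i)⁻¹)⁻¹)
                * (((K : ℝ) ^ 2 - 1) / 12
                    - c₂ * ((K : ℝ) * (∑ i, (κ i)⁻¹)⁻¹) ^ 2 / ((K : ℝ) ^ 2 * ∏ i, κ i))
                * x ^ 2))
      =O[nhdsWithin 0 (Set.Ioi 0)] (fun x => x ^ 3) := by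
  have hK2 : (2:ℝ) ≤ (K:ℝ) := by exact_mod_cast hK
  have hK0 : (0:ℝ) < (K:ℝ) := by linarith
  set l := nhdsWithin (0:ℝ) (Set.Ioi 0) with hl
  set G := ∏ i, κ i with hGdef
  set S := ∑ i, (κ i)⁻¹ with hSdef
  have hG : 0 < G := Finset.prod_pos (fun i _ => hκ i)
  have hS : 0 < S := Finset.sum_pos (fun i _ => inv_pos.2 (hκ i))
    (Finset.univ_nonempty_iff.mpr (Fin.pos_iff_nonempty.mp (by omega)))
  set κh := (K:ℝ) * S⁻¹ with hκhdef
  have hκh : 0 < κh := mul_pos hK0 (inv_pos.2 hS)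
  set a := (K:ℝ) ^ 2 * G / κh with hadef
  have ha : 0 < a := div_pos (mul_pos (pow_pos hK0 2) hG) hκh
  set β := κh * (((K:ℝ) ^ 2 - 1) / 12 - c₂ * κh ^ 2 / ((K:ℝ) ^ 2 * G)) with hβdef
  -- polynomial Taylor expansion of chebQ K
  set c2c : ℝ := (K:ℝ)^2 * ((K:ℝ)^2 - 1) / 12 with hc2cdef
  have hWdvd : (Polynomial.X : Polynomial ℝ)^3 ∣
      (chebQ K - Polynomial.C 2 - Polynomial.C ((K:ℝ)^2) * Polynomial.X
        - Polynomial.C c2c * Polynomial.X^2) := by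
    rw [Polynomial.X_pow_dvd_iff]
    intro d hd
    have e0 := chebQ_coeff0 K
    have e1 := chebQ_coeff1 K
    have e2 := chebQ_coeff2 K
    interval_cases d <;>
      · simp only [Polynomial.coeff_sub, Polynomial.coeff_C_mul, Polynomial.coeff_X,
          Polynomial.coeff_X_pow, Polynomial.coeff_C, e0, e1, e2]
        norm_num [hc2cdef]
  obtain ⟨M, hM⟩ := hWdvd
  have hr : ∀ x:ℝ, (chebQ K).eval x = 2 + (K:ℝ)^2*x + c2c*x^2 + x^3 * M.eval x := by
    intro x
    have h := congrArg (Polynomial.eval x) hM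
    simp only [Polynomial.eval_sub, Polynomial.eval_mul, Polynomial.eval_pow,
      Polynomial.eval_C, Polynomial.eval_X] at h
    linear_combination h
  -- functions
  set D : ℝ → ℝ := fun x => 2*c₂*(Real.sqrt (a^2 + 4*c₂*G*((chebQ K).eval x - 2))
      + (a + 2*c₂*(κh*x + β*x^2))) with hDdef
  set E : ℝ → ℝ := fun x => 4*c₂*(G*(M.eval x) - 2*c₂*κh*β - c₂*β^2*x) with hEdef
  have hKne : (K:ℝ) ≠ 0 := ne_of_gt hK0
  have hGne : G ≠ 0 := ne_of_gt hG
  have hκhne : κh ≠ 0 := ne_of_gt hκh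
  have hc₂ne : c₂ ≠ 0 := ne_of_gt hc₂
  have hkey : ∀ x:ℝ, (a^2 + 4*c₂*G*((chebQ K).eval x - 2))
      - (a + 2*c₂*(κh*x + β*x^2))^2 = x^3 * E x := by
    intro x
    rw [hr x]
    simp only [hEdef, hadef, hβdef, hc2cdef]
    field_simp
    ring
  -- limits
  have hFl : Tendsto (fun x:ℝ => a^2 + 4*c₂*G*((chebQ K).eval x - 2)) l (𝓝 (a^2)) := by
    have hc : Continuous fun x:ℝ => a^2 + 4*c₂*G*((chebQ K).eval x - 2) :=
      continuous_const.add (continuous_const.mul ((chebQ K).continuous.sub continuous_const))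
    have h0 : (chebQ K).eval 0 = 2 := by
      rw [← Polynomial.coeff_zero_eq_eval_zero, chebQ_coeff0]
    have h := hc.tendsto 0
    rw [show a^2 + 4*c₂*G*((chebQ K).eval 0 - 2) = a^2 by rw [h0]; ring] at h
    exact h.mono_left nhdsWithin_le_nhds
  have hbl : Tendsto (fun x:ℝ => a + 2*c₂*(κh*x + β*x^2)) l (𝓝 a) := by
    have hc : Continuous fun x:ℝ => a + 2*c₂*(κh*x + β*x^2) :=
      continuous_const.add (continuous_const.mul ((continuous_const.mul continuous_id).add
        (continuous_const.mul (continuous_pow 2))))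
    have h := hc.tendsto 0
    rw [show a + 2*c₂*(κh*0 + β*0^2) = a by ring] at h
    exact h.mono_left nhdsWithin_le_nhds
  have hDl : Tendsto D l (𝓝 (2*c₂*(a + a))) := by
    have := ((hFl.sqrt).add hbl).const_mul (2*c₂)
    rw [Real.sqrt_sq ha.le] at this
    simpa [hDdef, mul_add] using this
  have hDinv : Tendsto (fun x => (D x)⁻¹) l (𝓝 ((2*c₂*(a + a))⁻¹)) :=
    hDl.inv₀ (by positivity)
  have hEl : Tendsto E l (𝓝 (E 0)) := by
    have hc : Continuous E := by
      rw [hEdef]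
      exact continuous_const.mul (((continuous_const.mul M.continuous).sub
        continuous_const).sub (continuous_const.mul continuous_id))
    exact (hc.tendsto 0).mono_left nhdsWithin_le_nhds
  -- big-O
  have hO : (fun x:ℝ => x^3 * (E x * (D x)⁻¹)) =O[l] (fun x:ℝ => x^3) := by
    have h1 : (fun x:ℝ => E x * (D x)⁻¹) =O[l] (fun _ => (1:ℝ)) :=
      (hEl.mul hDinv).isBigO_one ℝ
    simpa using (isBigO_refl (fun x:ℝ => x^3) l).mul h1
  -- eventual equality
  have hFpos : ∀ᶠ x in l, 0 < a^2 + 4*c₂*G*((chebQ K).eval x - 2) :=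
    hFl.eventually (eventually_gt_nhds (by positivity))
  have hbpos : ∀ᶠ x in l, 0 < a + 2*c₂*(κh*x + β*x^2) :=
    hbl.eventually (eventually_gt_nhds ha)
  have hxpos : ∀ᶠ x in l, 0 < x := eventually_mem_nhdsWithin
  have heq : (fun x : ℝ => (-a + Real.sqrt (a^2 + 4*c₂*G*P.eval x)) / (2*c₂)
      - (κh*x + β*x^2)) =ᶠ[l] fun x => x^3 * (E x * (D x)⁻¹) := by
    filter_upwards [hFpos, hbpos, hxpos] with x hF hb hx
    rw [eval_P_eq K P hP hx] at *
    have hsq : Real.sqrt (a^2 + 4*c₂*G*((chebQ K).eval x - 2)) ^ 2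
        = a^2 + 4*c₂*G*((chebQ K).eval x - 2) := Real.sq_sqrt hF.le
    have hden : 0 < Real.sqrt (a^2 + 4*c₂*G*((chebQ K).eval x - 2))
        + (a + 2*c₂*(κh*x + β*x^2)) :=
      add_pos_of_nonneg_of_pos (Real.sqrt_nonneg _) hb
    rw [show x^3 * (E x * (D x)⁻¹) = (x^3 * E x) * (D x)⁻¹ by ring, ← hkey x]
    simp only [hDdef]
    rw [eq_mul_inv_iff_mul_eq₀ (mul_ne_zero (mul_ne_zero two_ne_zero hc₂ne) hden.ne')]
    have hcc : c₂⁻¹ * c₂ = 1 := inv_mul_cancel₀ hc₂ne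
    linear_combination hsq + (-a + Real.sqrt (a^2 + 4*c₂*G*((chebQ K).eval x - 2)))
      * (Real.sqrt (a^2 + 4*c₂*G*((chebQ K).eval x - 2)) + (a + 2*c₂*(κh*x + β*x^2))) * hcc
  exact hO.congr' heq.symm EventuallyEq.rfl
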